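/- Suppose b = 0 and k₂ = 0, and α, β₁, β₂, k₁ are all strictly positive. Then the set of fixed points of V in S³ is exactly Λ₁₂ = {(x,u,y,v) ∈ S³ : u = 0}. -/
import Mathlib


/-- The discrete-time SISI epidemic operator. -/
noncomputable def sisiV (b α β₁ β₂ k₁ k₂ : ℝ) (p : ℝ × ℝ × ℝ × ℝ) : ℝ × ℝ × ℝ × ℝ :=
  (p.1 + b - b * p.1 - β₁ * (k₁ * p.2.1 + k₂ * p.2.2.2) * p.1,
   p.2.1 - b * p.2.1 - α * p.2.1 + β₁ * (k₁ * p.2.1 + k₂ * p.2.2.2) * p.1,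
   p.2.2.1 - b * p.2.2.1 + α * p.2.1 - β₂ * (k₁ * p.2.1 + k₂ * p.2.2.2) * p.2.2.1,
   p.2.2.2 - b * p.2.2.2 + β₂ * (k₁ * p.2.1 + k₂ * p.2.2.2) * p.2.2.1)

/-- The simplex S³ in ℝ⁴. -/
def simplexS3 : Set (ℝ × ℝ × ℝ × ℝ) :=
  {p | 0 ≤ p.1 ∧ 0 ≤ p.2.1 ∧ 0 ≤ p.2.2.1 ∧ 0 ≤ p.2.2.2 ∧
       p.1 + p.2.1 + p.2.2.1 + p.2.2.2 = 1}

theorem fixedPoints_b_k2_zero (b α β₁ β₂ k₁ k₂ : ℝ)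
    (hb : b = 0) (hk₂ : k₂ = 0) (hα : 0 < α) (hβ₁ : 0 < β₁)
    (hβ₂ : 0 < β₂) (hk₁ : 0 < k₁) :
    {p : ℝ × ℝ × ℝ × ℝ | p ∈ simplexS3 ∧ sisiV b α β₁ β₂ k₁ k₂ p = p} =
      {p : ℝ × ℝ × ℝ × ℝ | p ∈ simplexS3 ∧ p.2.1 = 0} := by
  subst hb hk₂
  ext ⟨x, u, y, v⟩
  simp only [Set.mem_setOf_eq, sisiV, Prod.mk.injEq, Prod.ext_iff]
  constructor
  · rintro ⟨hs, h1, h2, h3, h4⟩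
    refine ⟨hs, ?_⟩
    have e1 : β₁ * (k₁ * u + 0 * v) * x = 0 := by linarith
    have : α * u = 0 := by linarith
    exact (mul_eq_zero.1 this).resolve_left (ne_of_gt hα)
  · rintro ⟨hs, hu⟩
    subst hu
    refine ⟨hs, by ring, by ring, by ring, by ring⟩
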